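/- Let d ≥ 2 and n ≥ 1, and let (G_i)_{i=1}^n be a GSIC POVM with n elements on ℂ^d with constants a and b. Then a ≤ d²/n², and equality a = d²/n² holds if and only if every G_i has rank 1. -/

import Mathlib

open scoped ComplexOrder

open Matrix in
lemma my_trace_eigen {d : ℕ} {A : Matrix (Fin d) (Fin d) ℂ} (hA : A.IsHermitian) :
    A.trace = ∑ j, (hA.eigenvalues j : ℂ) := by
  conv_lhs => rw [hA.spectral_theorem, Unitary.conjStarAlgAut_apply]
  rw [Matrix.trace_mul_cycle, (Unitary.mem_iff.mp (hA.eigenvectorUnitary).2).1, one_mul,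
    Matrix.trace_diagonal]
  rfl

open Matrix in
lemma my_trace_sq_eigen {d : ℕ} {A : Matrix (Fin d) (Fin d) ℂ} (hA : A.IsHermitian) :
    (A * A).trace = ∑ j, (hA.eigenvalues j : ℂ) ^ 2 := by
  have hU : (star (hA.eigenvectorUnitary : Matrix (Fin d) (Fin d) ℂ)) *
      (hA.eigenvectorUnitary : Matrix (Fin d) (Fin d) ℂ) = 1 :=
    (Unitary.mem_iff.mp (hA.eigenvectorUnitary).2).1
  have key : A * A = (hA.eigenvectorUnitary : Matrix (Fin d) (Fin d) ℂ) *
      (diagonal (RCLike.ofReal ∘ hA.eigenvalues) * diagonal (RCLike.ofReal ∘ hA.eigenvalues)) *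
      (star (hA.eigenvectorUnitary : Matrix (Fin d) (Fin d) ℂ)) := by
    conv_lhs => rw [hA.spectral_theorem, Unitary.conjStarAlgAut_apply]
    simp only [Matrix.mul_assoc]
    rw [← Matrix.mul_assoc (star _) _ _, hU, one_mul]
  rw [key, Matrix.trace_mul_cycle, ← Matrix.mul_assoc, hU, one_mul,
    Matrix.diagonal_mul_diagonal, Matrix.trace_diagonal]
  simp [sq]

/-- cross-term lemma: for nonneg `f`, if `∑ f² = (∑ f)²` then pairwise products vanish. -/
lemma my_cross_zero {d : ℕ} (f : Fin d → ℝ) (hf : ∀ j, 0 ≤ f j)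
    (heq : ∑ j, f j ^ 2 = (∑ j, f j) ^ 2) :
    ∀ j k, j ≠ k → f j * f k = 0 := by
  classical
  have expand : (∑ j, f j) ^ 2 = ∑ j, f j ^ 2 + ∑ j, ∑ k ∈ Finset.univ.erase j, f j * f k := by
    rw [sq, Finset.sum_mul_sum, ← Finset.sum_add_distrib]
    refine Finset.sum_congr rfl fun j _ => ?_
    rw [← Finset.add_sum_erase _ _ (Finset.mem_univ j), sq]
  have hz : ∑ j, ∑ k ∈ Finset.univ.erase j, f j * f k = 0 := by linarith [heq, expand]
  have h1 := (Finset.sum_eq_zero_iff_of_nonneg (fun j _ =>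
    Finset.sum_nonneg fun k _ => mul_nonneg (hf j) (hf k))).mp hz
  intro j k hjk
  have h2 := (Finset.sum_eq_zero_iff_of_nonneg (fun k _ =>
    mul_nonneg (hf j) (hf k))).mp (h1 j (Finset.mem_univ j))
  exact h2 k (Finset.mem_erase.mpr ⟨hjk.symm, Finset.mem_univ k⟩)

/-- For a GSIC POVM `(G i)_{i=1}^n` on `ℂ^d` with constants `a`, `b`,
we have `a ≤ d²/n²`, with equality iff every `G i` has rank 1. -/
theorem gsic_purity_upper_bound (d n : ℕ) (hd : 2 ≤ d) (hn : 1 ≤ n)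
    (G : Fin n → Matrix (Fin d) (Fin d) ℂ)
    (hpsd : ∀ i, (G i).PosSemidef)
    (hsum : ∑ i, G i = 1)
    (a b : ℝ)
    (ha : ∀ i, (G i * G i).trace = (a : ℂ))
    (hb : ∀ i j, i ≠ j → (G i * G j).trace = (b : ℂ)) :
    a ≤ (d : ℝ) ^ 2 / n ^ 2 ∧
      (a = (d : ℝ) ^ 2 / n ^ 2 ↔ ∀ i, (G i).rank = 1) := by
  classical
  have hn0 : (0 : ℝ) < n := by exact_mod_cast hn
  have hd0 : (0 : ℝ) < d := by positivity
  set μ : Fin n → Fin d → ℝ := fun i => ((hpsd i).1).eigenvalues with hμdef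
  have hμnn : ∀ i j, 0 ≤ μ i j := fun i j => (hpsd i).eigenvalues_nonneg j
  -- a = ∑ μ²
  have hA : ∀ i, a = ∑ j, μ i j ^ 2 := by
    intro i
    have h1 : ((a : ℝ) : ℂ) = ((∑ j, μ i j ^ 2 : ℝ) : ℂ) := by
      rw [← ha i, my_trace_sq_eigen (hpsd i).1]; push_cast; rfl
    exact_mod_cast h1
  set t : Fin n → ℝ := fun i => ∑ j, μ i j with htdef
  have ht_nn : ∀ i, 0 ≤ t i := fun i => Finset.sum_nonneg fun j _ => hμnn i j
  have hT : ∀ i, (G i).trace = ((t i : ℝ) : ℂ) := by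
    intro i
    rw [my_trace_eigen (hpsd i).1]
    simp only [htdef]
    push_cast; rfl
  have hsumT : ∑ i, t i = (d : ℝ) := by
    have h1 : ∑ i, (G i).trace = (d : ℂ) := by
      rw [← Matrix.trace_sum, hsum, Matrix.trace_one]; simp
    have h2 : ((∑ i, t i : ℝ) : ℂ) = ((d : ℝ) : ℂ) := by
      push_cast
      rw [← h1]
      exact (Finset.sum_congr rfl fun i _ => (hT i).symm)
    exact_mod_cast h2
  have haleT : ∀ i, a ≤ t i ^ 2 := fun i => by
    rw [hA i]
    exact Finset.sum_sq_le_sq_sum_of_nonneg fun j _ => hμnn i j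
  -- the main bound
  obtain ⟨i0, _, hi0⟩ := Finset.exists_min_image Finset.univ t
    (Finset.univ_nonempty_iff.mpr ⟨⟨0, hn⟩⟩)
  have hmin : (n : ℝ) * t i0 ≤ (d : ℝ) := by
    calc (n : ℝ) * t i0 = ∑ _i : Fin n, t i0 := by
          simp [Finset.sum_const, mul_comm]
      _ ≤ ∑ i, t i := Finset.sum_le_sum fun i _ => hi0 i (Finset.mem_univ i)
      _ = (d : ℝ) := hsumT
  have hti0 : t i0 ≤ (d : ℝ) / n := by
    rw [le_div_iff₀ hn0]; linarith
  have hbound : a ≤ (d : ℝ) ^ 2 / n ^ 2 := by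
    calc a ≤ t i0 ^ 2 := haleT i0
      _ ≤ ((d : ℝ) / n) ^ 2 := by
          apply pow_le_pow_left₀ (ht_nn i0) hti0
      _ = (d : ℝ) ^ 2 / n ^ 2 := div_pow _ _ _
  refine ⟨hbound, ?_, ?_⟩
  · -- equality → rank 1
    intro heq i
    have hapos : 0 < a := by rw [heq]; positivity
    have hge : ∀ i, (d : ℝ) / n ≤ t i := by
      intro i
      have h1 : ((d : ℝ) / n) ^ 2 ≤ t i ^ 2 := by
        rw [div_pow, ← heq]; exact haleT i
      nlinarith [ht_nn i, div_nonneg hd0.le hn0.le]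
    have hteq : ∀ i, t i = (d : ℝ) / n := by
      have hz : ∑ i, (t i - (d : ℝ) / n) = 0 := by
        rw [Finset.sum_sub_distrib, hsumT, Finset.sum_const, Finset.card_univ, Fintype.card_fin, nsmul_eq_mul]
        field_simp
        ring
      intro i
      have := (Finset.sum_eq_zero_iff_of_nonneg fun i _ => sub_nonneg.mpr (hge i)).mp hz
        i (Finset.mem_univ i)
      linarith
    -- equality in Cauchy–Schwarz for index i
    have hsq : ∑ j, μ i j ^ 2 = (∑ j, μ i j) ^ 2 := by
      rw [← hA i]
      show a = t i ^ 2
      rw [hteq i, heq, div_pow]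
    have hcross := my_cross_zero (μ i) (hμnn i) hsq
    have hex : ∃ j, μ i j ≠ 0 := by
      by_contra hcon
      push_neg at hcon
      have : a = 0 := by rw [hA i]; simp [hcon]
      linarith
    obtain ⟨j0, hj0⟩ := hex
    rw [(hpsd i).1.rank_eq_card_non_zero_eigs]
    rw [Fintype.card_eq_one_iff]
    refine ⟨⟨j0, hj0⟩, ?_⟩
    rintro ⟨k, hk⟩
    have hkj : k = j0 := by
      by_contra hne
      rcases mul_eq_zero.mp (hcross k j0 hne) with h | h
      · exact hk h
      · exact hj0 h
    exact Subtype.ext hkj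
  · -- rank 1 → equality
    intro hr
    have key : ∀ i, t i ^ 2 = a := by
      intro i
      have hc : Fintype.card {j // μ i j ≠ 0} = 1 := by
        rw [← (hpsd i).1.rank_eq_card_non_zero_eigs]; exact hr i
      obtain ⟨⟨j0, hj0⟩, huniq⟩ := Fintype.card_eq_one_iff.mp hc
      have hzero : ∀ k, k ≠ j0 → μ i k = 0 := by
        intro k hk
        by_contra hne
        exact hk (congrArg Subtype.val (huniq ⟨k, hne⟩))
      have h1 : t i = μ i j0 :=
        Finset.sum_eq_single_of_mem j0 (Finset.mem_univ j0) fun k _ hk => hzero k hk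
      have h2 : a = μ i j0 ^ 2 := by
        rw [hA i]
        exact Finset.sum_eq_single_of_mem j0 (Finset.mem_univ j0)
          fun k _ hk => by rw [hzero k hk]; ring
      rw [h1, h2]
    have hann : 0 ≤ a := by
      rw [← key ⟨0, hn⟩]; positivity
    have hs : ∀ i, t i = Real.sqrt a := by
      intro i
      rw [← key i, Real.sqrt_sq (ht_nn i)]
    have hd_eq : (d : ℝ) = n * Real.sqrt a := by
      rw [← hsumT]
      simp [hs, Finset.sum_const, mul_comm]
    have hsa : Real.sqrt a = (d : ℝ) / n := by
      rw [eq_div_iff hn0.ne', hd_eq]; ring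
    calc a = Real.sqrt a ^ 2 := (Real.sq_sqrt hann).symm
      _ = ((d : ℝ) / n) ^ 2 := by rw [hsa]
      _ = (d : ℝ) ^ 2 / n ^ 2 := div_pow _ _ _
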